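/- Define the Schilder rate function I on the space C_0(ℝ^d) of continuous paths starting at 0 by I(w) = (1/2)‖w‖²_H if w lies in Cameron–Martin space H (absolutely continuous with square-integrable derivative) and I(w) = ∞ otherwise, where ‖w‖²_H = ∫_0^1 |w'_t|² dt. Then I is a good rate function: for each c ≥ 0 the sublevel set {w : I(w) ≤ c} is compact in the uniform topology. -/

import Mathlib

open MeasureTheory

/-- `h'` is a square-integrable derivative of the continuous path `w` on `[0,1]`:
`w_t = ∫₀ᵗ h'_s ds` with `h' ∈ L²([0,1], ℝ^d)`. So `w` lies in Cameron–Martin space. -/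
def IsCMDeriv (d : ℕ) (w : C(Set.Icc (0:ℝ) 1, EuclideanSpace ℝ (Fin d)))
    (h' : ℝ → EuclideanSpace ℝ (Fin d)) : Prop :=
  MemLp h' 2 (volume.restrict (Set.Icc (0:ℝ) 1)) ∧
  ∀ t : Set.Icc (0:ℝ) 1, w t = ∫ s in (0:ℝ)..(t:ℝ), h' s

/-- The Schilder rate function: `I(w) = (1/2)‖w‖_H² = (1/2)∫₀¹ |w'|²` if `w` is a
Cameron–Martin path, and `I(w) = ∞` otherwise (`sInf ∅ = ∞` in `ℝ≥0∞`). -/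
noncomputable def schilderRate (d : ℕ)
    (w : C(Set.Icc (0:ℝ) 1, EuclideanSpace ℝ (Fin d))) : ENNReal :=
  sInf {e | ∃ h', IsCMDeriv d w h' ∧
    e = ENNReal.ofReal ((1/2) * ∫ t in (0:ℝ)..1, ‖h' t‖ ^ 2)}

open Set

noncomputable section
variable {d : ℕ}

abbrev Epath (d : ℕ) := EuclideanSpace ℝ (Fin d)
abbrev μ01 : Measure ℝ := volume.restrict (Set.Icc (0:ℝ) 1)

instance : IsFiniteMeasure (μ01) := by
  constructor
  rw [Measure.restrict_apply_univ]
  simp [Real.volume_Icc]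

abbrev Hsp (d : ℕ) := Lp (Epath d) 2 μ01

def gind (d : ℕ) (t : ℝ) (i : Fin d) : Hsp d :=
  indicatorConstLp 2 (measurableSet_Ioc : MeasurableSet (Set.Ioc 0 t)) (measure_ne_top _ _)
    (EuclideanSpace.single i (1:ℝ))

lemma norm_indicatorConstLp_le {s : Set ℝ} (hs : MeasurableSet s) (v : Epath d) {b : ℝ}
    (hb : 0 ≤ b) (hμ : μ01 s ≤ ENNReal.ofReal b) (hv : ‖v‖ ≤ 1) :
    ‖indicatorConstLp 2 hs (measure_ne_top μ01 s) v‖ ≤ Real.sqrt b := by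
  rw [norm_indicatorConstLp (by norm_num) (by norm_num)]
  have h1 : (μ01 s).toReal ≤ b := by
    refine ENNReal.toReal_le_of_le_ofReal hb hμ
  have h2 : (0:ℝ) ≤ (μ01 s).toReal := ENNReal.toReal_nonneg
  calc ‖v‖ * (μ01 s).toReal ^ (1 / (2:ENNReal).toReal)
      ≤ 1 * (μ01 s).toReal ^ (1 / (2:ENNReal).toReal) := by
        apply mul_le_mul_of_nonneg_right hv (Real.rpow_nonneg h2 _)
    _ = Real.sqrt ((μ01 s).toReal) := by
        rw [one_mul, Real.sqrt_eq_rpow]; norm_num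
    _ ≤ Real.sqrt b := Real.sqrt_le_sqrt h1

lemma indicatorConstLp_set_congr {α E' : Type*} [MeasurableSpace α] {μ : Measure α}
    [NormedAddCommGroup E'] {p : ENNReal} {s t : Set α} (h : s = t) (hs : MeasurableSet s)
    (hμs : μ s ≠ ⊤) (c : E') :
    indicatorConstLp p hs hμs c =
      indicatorConstLp p (h ▸ hs) (h ▸ hμs) c := by subst h; rfl

lemma gind_sub {s t : ℝ} (hs : 0 ≤ s) (hst : s ≤ t) (i : Fin d) :
    gind d t i - gind d s i =
      indicatorConstLp 2 (measurableSet_Ioc : MeasurableSet (Set.Ioc s t)) (measure_ne_top _ _)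
        (EuclideanSpace.single i (1:ℝ)) := by
  simp only [gind]
  rw [sub_eq_iff_eq_add]
  have hdisj : Disjoint (Set.Ioc s t) (Set.Ioc 0 s) := by
    apply Set.disjoint_left.mpr
    rintro x ⟨hx1, _⟩ ⟨_, hx2⟩
    exact absurd hx2 (not_le.mpr hx1)
  rw [← indicatorConstLp_disjoint_union measurableSet_Ioc measurableSet_Ioc
    (measure_ne_top _ _) (measure_ne_top _ _) hdisj]
  exact indicatorConstLp_set_congr (by rw [Set.union_comm, Ioc_union_Ioc_eq_Ioc hs hst]) _ _ _

lemma mu01_Ioc_le {s t : ℝ} : μ01 (Set.Ioc s t) ≤ ENNReal.ofReal (t - s) := by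
  rw [Measure.restrict_apply measurableSet_Ioc]
  exact le_trans (measure_mono Set.inter_subset_left) (le_of_eq (Real.volume_Ioc))

lemma gind_dist_le {s t : ℝ} (hs : 0 ≤ s) (hst : s ≤ t) (i : Fin d) :
    ‖gind d t i - gind d s i‖ ≤ Real.sqrt (t - s) := by
  rw [gind_sub hs hst]
  exact norm_indicatorConstLp_le measurableSet_Ioc _ (sub_nonneg.mpr hst) mu01_Ioc_le
    (le_of_eq (by simp [EuclideanSpace.norm_single]))

def psiRaw (x' : WeakDual ℝ (Hsp d)) (t : ℝ) : Epath d := WithLp.toLp 2 (fun i => x' (gind d t i))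

lemma psiRaw_sub_norm (x' : WeakDual ℝ (Hsp d)) {s t : ℝ} (hs : 0 ≤ s) (hst : s ≤ t) :
    ‖psiRaw x' t - psiRaw x' s‖ ≤
      ‖WeakDual.toStrongDual x'‖ * Real.sqrt (d * (t - s)) := by
  set C := ‖WeakDual.toStrongDual x'‖ with hCdef
  have hC : 0 ≤ C := norm_nonneg _
  have hts : (0:ℝ) ≤ t - s := sub_nonneg.mpr hst
  have hcoord : ∀ i : Fin d, ‖x' (gind d t i) - x' (gind d s i)‖ ≤ C * Real.sqrt (t - s) := by
    intro i
    rw [← map_sub]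
    calc ‖x' (gind d t i - gind d s i)‖
        ≤ C * ‖gind d t i - gind d s i‖ :=
          ContinuousLinearMap.le_opNorm (WeakDual.toStrongDual x') _
      _ ≤ C * Real.sqrt (t - s) :=
          mul_le_mul_of_nonneg_left (gind_dist_le hs hst i) hC
  rw [EuclideanSpace.norm_eq]
  have hb : ∀ i : Fin d, ‖(psiRaw x' t - psiRaw x' s) i‖ ^ 2 ≤ (C * Real.sqrt (t - s)) ^ 2 := by
    intro i
    have : (psiRaw x' t - psiRaw x' s) i = x' (gind d t i) - x' (gind d s i) := rfl
    rw [this]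
    exact pow_le_pow_left₀ (norm_nonneg _) (hcoord i) 2
  calc Real.sqrt (∑ i : Fin d, ‖(psiRaw x' t - psiRaw x' s) i‖ ^ 2)
      ≤ Real.sqrt (∑ _i : Fin d, (C * Real.sqrt (t - s)) ^ 2) :=
        Real.sqrt_le_sqrt (Finset.sum_le_sum fun i _ => hb i)
    _ = C * Real.sqrt (d * (t - s)) := by
        rw [Finset.sum_const, Finset.card_univ, Fintype.card_fin, nsmul_eq_mul,
          mul_pow, Real.sq_sqrt hts]
        rw [show (d : ℝ) * (C ^ 2 * (t - s)) = C ^ 2 * (d * (t - s)) by ring]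
        rw [Real.sqrt_mul (sq_nonneg C), Real.sqrt_sq hC]

lemma continuousOn_of_sqrt_bound {X : Type*} [PseudoMetricSpace X] {F : ℝ → X} {S : Set ℝ}
    {K : ℝ} (hK : 0 ≤ K)
    (h : ∀ s ∈ S, ∀ t ∈ S, s ≤ t → dist (F t) (F s) ≤ K * Real.sqrt (t - s)) :
    ContinuousOn F S := by
  rw [Metric.continuousOn_iff]
  intro b hb ε hε
  refine ⟨(ε / (K + 1)) ^ 2, by positivity, fun a ha hab => ?_⟩
  have key : ∀ u ∈ S, ∀ v ∈ S, u ≤ v → dist u v < (ε / (K + 1)) ^ 2 →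
      dist (F v) (F u) < ε := by
    intro u hu v hv huv hd
    have h1 : v - u < (ε / (K + 1)) ^ 2 := by
      rw [Real.dist_eq, abs_sub_comm, abs_of_nonneg (sub_nonneg.mpr huv)] at hd; exact hd
    have h2 : Real.sqrt (v - u) ≤ ε / (K + 1) := by
      rw [show ε / (K + 1) = Real.sqrt ((ε / (K + 1)) ^ 2) from
        (Real.sqrt_sq (by positivity)).symm]
      exact Real.sqrt_le_sqrt h1.le
    have h3 : K * Real.sqrt (v - u) < ε := by
      calc K * Real.sqrt (v - u) ≤ K * (ε / (K + 1)) :=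
            mul_le_mul_of_nonneg_left h2 hK
        _ < ε := by
            rw [mul_div_assoc']
            rw [div_lt_iff₀ (by positivity)]
            nlinarith
    exact lt_of_le_of_lt (h u hu v hv huv) h3
  rcases le_total a b with hab' | hab'
  · rw [dist_comm]
    exact key a ha b hb hab' ((dist_comm a b) ▸ hab)
  · exact key b hb a ha hab' (by rwa [dist_comm])

lemma psiRaw_continuousOn (x' : WeakDual ℝ (Hsp d)) :
    ContinuousOn (psiRaw x') (Set.Icc (0:ℝ) 1) := by
  refine continuousOn_of_sqrt_bound
    (K := ‖WeakDual.toStrongDual x'‖ * Real.sqrt d) (by positivity) ?_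
  intro s hs t ht hst
  rw [dist_eq_norm]
  calc ‖psiRaw x' t - psiRaw x' s‖
      ≤ ‖WeakDual.toStrongDual x'‖ * Real.sqrt (d * (t - s)) :=
        psiRaw_sub_norm x' hs.1 hst
    _ = ‖WeakDual.toStrongDual x'‖ * Real.sqrt d * Real.sqrt (t - s) := by
        rw [Real.sqrt_mul (Nat.cast_nonneg d), mul_assoc]

def psiC (x' : WeakDual ℝ (Hsp d)) : C(Set.Icc (0:ℝ) 1, Epath d) :=
  ⟨Set.restrict _ (psiRaw x'), (psiRaw_continuousOn x').restrict⟩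

lemma psiC_apply (x' : WeakDual ℝ (Hsp d)) (t : Set.Icc (0:ℝ) 1) :
    psiC x' t = psiRaw x' (t : ℝ) := rfl

lemma integrable_coe (f : Hsp d) : Integrable (f : ℝ → Epath d) μ01 :=
  (Lp.memLp f).integrable (by norm_num)

lemma restrict_Ioc_eq {t : ℝ} (ht0 : 0 ≤ t) (ht1 : t ≤ 1) :
    μ01.restrict (Set.Ioc 0 t) = volume.restrict (Set.Ioc 0 t) := by
  rw [Measure.restrict_restrict measurableSet_Ioc]
  congr 1
  exact Set.inter_eq_left.mpr (fun x hx => ⟨le_of_lt hx.1, hx.2.trans ht1⟩)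

lemma intervalIntegrable_coe (f : Hsp d) {t : ℝ} (ht0 : 0 ≤ t) (ht1 : t ≤ 1) :
    IntervalIntegrable (f : ℝ → Epath d) volume 0 t := by
  rw [intervalIntegrable_iff, Set.uIoc_of_le ht0]
  have := (integrable_coe f).restrict (s := Set.Ioc 0 t)
  rwa [restrict_Ioc_eq ht0 ht1] at this

lemma bridge (f : Hsp d) {t : ℝ} (ht0 : 0 ≤ t) (ht1 : t ≤ 1) (i : Fin d) :
    (InnerProductSpace.toDual ℝ (Hsp d) f) (gind d t i)
      = (∫ s in (0:ℝ)..t, (f : ℝ → Epath d) s) i := by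
  rw [InnerProductSpace.toDual_apply_apply]
  have h1 : (inner ℝ f (gind d t i) : ℝ)
      = ∫ a, (inner ℝ (f a) ((gind d t i : ℝ → Epath d) a) : ℝ) ∂μ01 := L2.inner_def f _
  have h2 : ∫ a, (inner ℝ (f a) ((gind d t i : ℝ → Epath d) a) : ℝ) ∂μ01
      = ∫ a, Set.indicator (Set.Ioc 0 t) (fun s => (inner ℝ (f s) (EuclideanSpace.single i (1:ℝ)) : ℝ)) a ∂μ01 := by
    apply integral_congr_ae
    filter_upwards [indicatorConstLp_coeFn (p := 2) (μ := μ01)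
      (hs := (measurableSet_Ioc : MeasurableSet (Set.Ioc 0 t)))
      (hμs := measure_ne_top μ01 _) (c := EuclideanSpace.single i (1:ℝ))] with a ha
    rw [show ((gind d t i : ℝ → Epath d) a) = _ from ha]
    by_cases hmem : a ∈ Set.Ioc 0 t
    · rw [Set.indicator_of_mem hmem, Set.indicator_of_mem hmem]
    · rw [Set.indicator_of_notMem hmem, Set.indicator_of_notMem hmem, inner_zero_right]
  have h3 : ∫ a, Set.indicator (Set.Ioc 0 t) (fun s => (inner ℝ (f s) (EuclideanSpace.single i (1:ℝ)) : ℝ)) a ∂μ01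
      = ∫ a in Set.Ioc 0 t, (inner ℝ (f a) (EuclideanSpace.single i (1:ℝ)) : ℝ) ∂μ01 :=
    integral_indicator measurableSet_Ioc
  rw [h1, h2, h3, restrict_Ioc_eq ht0 ht1, ← intervalIntegral.integral_of_le ht0]
  rw [show (∫ s in (0:ℝ)..t, (f : ℝ → Epath d) s) i
      = EuclideanSpace.proj i (∫ s in (0:ℝ)..t, (f : ℝ → Epath d) s) from rfl]
  rw [← ContinuousLinearMap.intervalIntegral_comp_comm _ (intervalIntegrable_coe f ht0 ht1)]
  apply intervalIntegral.integral_congr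
  intro a _
  simp [EuclideanSpace.inner_single_right]

lemma gind_zero (i : Fin d) : gind d 0 i = 0 := by
  rw [gind, indicatorConstLp_set_congr (Set.Ioc_self 0) _ _ _]
  exact indicatorConstLp_empty

lemma norm_sq_eq_integral (f : Hsp d) :
    ∫ t in (0:ℝ)..1, ‖(f : ℝ → Epath d) t‖ ^ 2 = ‖f‖ ^ 2 := by
  have h1 : (inner ℝ f f : ℝ) = ∫ a, (inner ℝ (f a) (f a) : ℝ) ∂μ01 := L2.inner_def f f
  rw [← real_inner_self_eq_norm_sq, h1]
  have h2 : ∀ a : ℝ, (inner ℝ (f a) (f a) : ℝ) = ‖(f : ℝ → Epath d) a‖ ^ 2 := fun a =>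
    real_inner_self_eq_norm_sq _
  simp_rw [h2]
  rw [show (∫ a, ‖(f : ℝ → Epath d) a‖ ^ 2 ∂μ01)
      = ∫ a in Set.Icc (0:ℝ) 1, ‖(f : ℝ → Epath d) a‖ ^ 2 from rfl]
  rw [integral_Icc_eq_integral_Ioc, intervalIntegral.integral_of_le zero_le_one]

lemma intervalIntegral_congr_of_ae01 {E' : Type*} [NormedAddCommGroup E'] [NormedSpace ℝ E']
    {g h : ℝ → E'} (hgh : g =ᵐ[μ01] h) {t : ℝ} (ht0 : 0 ≤ t) (ht1 : t ≤ 1) :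
    ∫ s in (0:ℝ)..t, g s = ∫ s in (0:ℝ)..t, h s := by
  rw [intervalIntegral.integral_of_le ht0, intervalIntegral.integral_of_le ht0]
  apply integral_congr_ae
  have : g =ᵐ[μ01.restrict (Set.Ioc 0 t)] h :=
    hgh.filter_mono (ae_mono Measure.restrict_le_self)
  rwa [restrict_Ioc_eq ht0 ht1] at this

def Kball (d : ℕ) (r : ℝ) : Set (WeakDual ℝ (Hsp d)) :=
  WeakDual.toStrongDual ⁻¹' Metric.closedBall 0 r

lemma norm_le_of_mem_Kball {r : ℝ} {x' : WeakDual ℝ (Hsp d)} (h : x' ∈ Kball d r) :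
    ‖WeakDual.toStrongDual x'‖ ≤ r := by
  simpa [Kball, Metric.mem_closedBall, dist_zero_right] using h

lemma psiC_continuousOn (r : ℝ) (hr : 0 ≤ r) : ContinuousOn (psiC (d := d)) (Kball d r) := by
  intro x₀ hx₀
  rw [ContinuousWithinAt, Metric.tendsto_nhds]
  intro ε hε
  set δ : ℝ := (ε/4)^2 / (r^2 * d + 1) with hδdef
  have hδpos : 0 < δ := by positivity
  set N : ℕ := ⌈1/δ⌉₊ with hNdef
  have hN1 : 1 ≤ N := Nat.one_le_iff_ne_zero.mpr (by
    simp only [hNdef, ne_eq, Nat.ceil_eq_zero, not_le]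
    positivity)
  have hNpos : (0:ℝ) < N := by exact_mod_cast hN1
  have hinvN : 1/(N:ℝ) ≤ δ := by
    rw [div_le_iff₀ hNpos]
    have h1 : 1/δ ≤ (N:ℝ) := Nat.le_ceil _
    rw [div_le_iff₀ hδpos] at h1
    linarith [mul_comm δ (N:ℝ)]
  -- endpoint (Hölder) estimate
  have hend : ∀ x' ∈ Kball d r, ∀ s t : ℝ, 0 ≤ s → s ≤ t → t - s ≤ δ →
      ‖psiRaw x' t - psiRaw x' s‖ ≤ ε/4 := by
    intro x' hx' s t hs hst hdelta
    refine (psiRaw_sub_norm x' hs hst).trans ?_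
    have hx'n : ‖WeakDual.toStrongDual x'‖ ≤ r := norm_le_of_mem_Kball hx'
    have h0 : ‖WeakDual.toStrongDual x'‖ * Real.sqrt (d * (t - s))
        = Real.sqrt (‖WeakDual.toStrongDual x'‖^2 * (d * (t - s))) := by
      rw [Real.sqrt_mul (sq_nonneg _), Real.sqrt_sq (norm_nonneg _)]
    rw [h0]
    have h1 : ‖WeakDual.toStrongDual x'‖^2 * (d * (t - s)) ≤ (r^2 * d + 1) * δ := by
      have hts : (0:ℝ) ≤ t - s := sub_nonneg.mpr hst
      have h2 : ‖WeakDual.toStrongDual x'‖^2 ≤ r^2 := by nlinarith [norm_nonneg (WeakDual.toStrongDual x')]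
      have hA : ‖WeakDual.toStrongDual x'‖^2 * ((d:ℝ) * (t - s)) ≤ r^2 * ((d:ℝ) * (t - s)) :=
        mul_le_mul_of_nonneg_right h2 (by positivity)
      have hC : (r^2 * (d:ℝ)) * (t - s) ≤ (r^2 * (d:ℝ)) * δ :=
        mul_le_mul_of_nonneg_left hdelta (by positivity)
      have hD : (r^2 * (d:ℝ)) * δ ≤ (r^2 * (d:ℝ) + 1) * δ :=
        mul_le_mul_of_nonneg_right (by linarith) hδpos.le
      nlinarith
    refine (Real.sqrt_le_sqrt h1).trans ?_
    rw [show (r^2 * d + 1) * δ = (ε/4)^2 by rw [hδdef]; field_simp]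
    rw [Real.sqrt_sq (by positivity)]
  set ε' : ℝ := ε/(4*(Real.sqrt d + 1)) with hε'def
  have hε'pos : 0 < ε' := by positivity
  set U : Set (WeakDual ℝ (Hsp d)) := ⋂ j ∈ Finset.range (N+1), ⋂ i : Fin d,
    {x' | ‖x' (gind d ((j:ℝ)/(N:ℝ)) i) - x₀ (gind d ((j:ℝ)/(N:ℝ)) i)‖ < ε'} with hUdef
  have hUopen : IsOpen U := by
    refine isOpen_biInter_finset fun j _ => isOpen_iInter_of_finite fun i => ?_
    have hcont : Continuous fun x' : WeakDual ℝ (Hsp d) =>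
        ‖x' (gind d ((j:ℝ)/(N:ℝ)) i) - x₀ (gind d ((j:ℝ)/(N:ℝ)) i)‖ :=
      ((WeakBilin.eval_continuous _ _).sub continuous_const).norm
    exact isOpen_lt hcont continuous_const
  have hx₀U : x₀ ∈ U := by
    simp only [hUdef, Set.mem_iInter, Set.mem_setOf_eq]
    intro j _ i
    simpa using hε'pos
  have hUst : ∀ x' ∈ U ∩ Kball d r, dist (psiC x') (psiC x₀) < ε := by
    rintro x' ⟨hU, hK⟩
    rw [ContinuousMap.dist_lt_iff hε]
    intro t
    have htr0 : (0:ℝ) ≤ (t:ℝ) := t.2.1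
    have htr1 : (t:ℝ) ≤ 1 := t.2.2
    set j : ℕ := ⌊(t:ℝ) * N⌋₊ with hjdef
    have hjN : j ≤ N := by
      have h4 : (t:ℝ) * N ≤ (N:ℝ) := by nlinarith
      calc j ≤ ⌊(N:ℝ)⌋₊ := Nat.floor_le_floor h4
        _ = N := Nat.floor_natCast N
    set p : ℝ := (j:ℝ)/(N:ℝ) with hpdef
    have hp0 : 0 ≤ p := by positivity
    have hpt : p ≤ (t:ℝ) := by
      rw [hpdef, div_le_iff₀ hNpos]
      exact Nat.floor_le (by positivity)
    have htp : (t:ℝ) - p ≤ 1/(N:ℝ) := by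
      have h5 : (t:ℝ) * N < (j:ℝ) + 1 := Nat.lt_floor_add_one _
      have h6 : (t:ℝ) ≤ ((j:ℝ)+1)/N := by
        rw [le_div_iff₀ hNpos]; linarith
      have h7 : ((j:ℝ)+1)/N - (j:ℝ)/N = 1/N := by field_simp; ring
      rw [hpdef]; linarith
    have hmid : ‖psiRaw x' p - psiRaw x₀ p‖ ≤ ε/4 := by
      have hU' := hU
      rw [hUdef] at hU'
      simp only [Set.mem_iInter, Set.mem_setOf_eq] at hU'
      have hcoord : ∀ i : Fin d, ‖(psiRaw x' p - psiRaw x₀ p) i‖ ≤ ε' := by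
        intro i
        have h8 := hU' j (Finset.mem_range.mpr (by omega)) i
        exact le_of_lt h8
      rw [EuclideanSpace.norm_eq]
      have h9 : Real.sqrt (∑ i : Fin d, ‖(psiRaw x' p - psiRaw x₀ p) i‖ ^ 2)
          ≤ Real.sqrt (∑ _i : Fin d, ε' ^ 2) :=
        Real.sqrt_le_sqrt (Finset.sum_le_sum fun i _ =>
          pow_le_pow_left₀ (norm_nonneg _) (hcoord i) 2)
      refine h9.trans ?_
      rw [Finset.sum_const, Finset.card_univ, Fintype.card_fin, nsmul_eq_mul,
        Real.sqrt_mul (Nat.cast_nonneg d), Real.sqrt_sq hε'pos.le]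
      have hsqd : (0:ℝ) ≤ Real.sqrt d := Real.sqrt_nonneg _
      rw [hε'def, mul_div_assoc', div_le_div_iff₀ (by positivity) (by norm_num)]
      nlinarith
    have hδtp : (t:ℝ) - p ≤ δ := htp.trans hinvN
    have hA : dist (psiC x' t) (psiRaw x' p) ≤ ε/4 := by
      rw [psiC_apply, dist_eq_norm]
      exact hend x' hK p (t:ℝ) hp0 hpt hδtp
    have hB : dist (psiRaw x' p) (psiRaw x₀ p) ≤ ε/4 := by
      rw [dist_eq_norm]; exact hmid
    have hC : dist (psiRaw x₀ p) (psiC x₀ t) ≤ ε/4 := by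
      rw [psiC_apply, dist_eq_norm']
      exact hend x₀ hx₀ p (t:ℝ) hp0 hpt hδtp
    calc dist (psiC x' t) (psiC x₀ t)
        ≤ dist (psiC x' t) (psiRaw x' p) + dist (psiRaw x' p) (psiRaw x₀ p)
          + dist (psiRaw x₀ p) (psiC x₀ t) := dist_triangle4 _ _ _ _
      _ ≤ ε/4 + ε/4 + ε/4 := by linarith
      _ < ε := by linarith
  exact mem_nhdsWithin.mpr ⟨U, hUopen, hx₀U, fun x' hx' => hUst x' hx'⟩

lemma psiC_toDual_eq (f : Hsp d) (t : Set.Icc (0:ℝ) 1) :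
    psiC (StrongDual.toWeakDual (InnerProductSpace.toDual ℝ (Hsp d) f)) t
      = ∫ s in (0:ℝ)..(t:ℝ), (f : ℝ → Epath d) s := by
  ext i
  exact bridge f t.2.1 t.2.2 i

/-- The Schilder rate function is a good rate function: each sublevel set
`{w ∈ C₀ : I(w) ≤ c}` is compact in the uniform topology. -/
theorem schilderRate_isGoodRateFunction (d : ℕ) (c : ℝ) (hc : 0 ≤ c) :
    IsCompact {w : C(Set.Icc (0:ℝ) 1, EuclideanSpace ℝ (Fin d)) |
      w ⟨0, by norm_num⟩ = 0 ∧ schilderRate d w ≤ ENNReal.ofReal c} := by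
  have hSeq : {w : C(Set.Icc (0:ℝ) 1, EuclideanSpace ℝ (Fin d)) |
      w ⟨0, by norm_num⟩ = 0 ∧ schilderRate d w ≤ ENNReal.ofReal c}
      = ⋂ n : ℕ, psiC '' (Kball d (Real.sqrt (2*c + 1/((n:ℝ)+1)))) := by
    ext w
    simp only [Set.mem_setOf_eq, Set.mem_iInter]
    constructor
    · rintro ⟨hw0, hrate⟩ n
      have hlt : schilderRate d w < ENNReal.ofReal (c + 1/(2*((n:ℝ)+1))) := by
        refine lt_of_le_of_lt hrate ?_
        rw [ENNReal.ofReal_lt_ofReal_iff (by positivity)]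
        have : (0:ℝ) < 1/(2*((n:ℝ)+1)) := by positivity
        linarith
      rw [schilderRate, sInf_lt_iff] at hlt
      obtain ⟨e, he, helt⟩ := hlt
      obtain ⟨h', hCM, rfl⟩ := he
      have hint : (1/2) * ∫ t in (0:ℝ)..1, ‖h' t‖^2 < c + 1/(2*((n:ℝ)+1)) := by
        by_contra hcon
        push_neg at hcon
        exact absurd helt (not_lt.mpr (ENNReal.ofReal_le_ofReal hcon))
      set f : Hsp d := MemLp.toLp h' hCM.1 with hfdef
      have hcoe : (f : ℝ → Epath d) =ᵐ[μ01] h' := MemLp.coeFn_toLp hCM.1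
      have hnormint : ∫ t in (0:ℝ)..1, ‖(f : ℝ → Epath d) t‖^2
          = ∫ t in (0:ℝ)..1, ‖h' t‖^2 :=
        intervalIntegral_congr_of_ae01 (hcoe.mono fun s hs => by rw [hs])
          zero_le_one le_rfl
      have hfnorm2 : ‖f‖^2 ≤ 2*c + 1/((n:ℝ)+1) := by
        rw [← norm_sq_eq_integral f, hnormint]
        have heq : 1/(2*((n:ℝ)+1)) = (1/((n:ℝ)+1))/2 := by
          rw [div_div]; ring_nf
        linarith
      have hfnorm : ‖f‖ ≤ Real.sqrt (2*c + 1/((n:ℝ)+1)) := by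
        rw [← Real.sqrt_sq (norm_nonneg f)]
        exact Real.sqrt_le_sqrt hfnorm2
      refine ⟨StrongDual.toWeakDual (InnerProductSpace.toDual ℝ (Hsp d) f), ?_, ?_⟩
      · simp only [Kball, Set.mem_preimage, Metric.mem_closedBall, dist_zero_right]
        rw [show WeakDual.toStrongDual
            (StrongDual.toWeakDual (InnerProductSpace.toDual ℝ (Hsp d) f))
            = InnerProductSpace.toDual ℝ (Hsp d) f from rfl]
        rw [LinearIsometryEquiv.norm_map]
        exact hfnorm
      · refine ContinuousMap.ext fun t => ?_
        rw [psiC_toDual_eq f t, hCM.2 t]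
        exact intervalIntegral_congr_of_ae01 hcoe t.2.1 t.2.2
    · intro hw
      constructor
      · obtain ⟨x', _, hx'w⟩ := hw 0
        rw [← hx'w]
        show psiRaw x' 0 = 0
        ext i
        show x' (gind d 0 i) = (0 : Epath d) i
        rw [gind_zero, map_zero]
        rfl
      · apply ENNReal.le_of_forall_pos_le_add
        intro ε hε _
        obtain ⟨n, hn⟩ := exists_nat_gt (1/(2*(ε:ℝ)))
        have hεpos : (0:ℝ) < ε := hε
        have hb : 1/(2*((n:ℝ)+1)) ≤ (ε:ℝ) := by
          rw [div_le_iff₀ (by positivity)]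
          rw [div_lt_iff₀ (by positivity)] at hn
          nlinarith [Nat.cast_nonneg (α := ℝ) n]
        obtain ⟨x', hx'K, hx'w⟩ := hw n
        set f : Hsp d := (InnerProductSpace.toDual ℝ (Hsp d)).symm
          (WeakDual.toStrongDual x') with hfdef
        have hfn : ‖f‖ ≤ Real.sqrt (2*c + 1/((n:ℝ)+1)) := by
          rw [hfdef, LinearIsometryEquiv.norm_map]
          exact norm_le_of_mem_Kball hx'K
        have hx'eq : StrongDual.toWeakDual
            (InnerProductSpace.toDual ℝ (Hsp d) f) = x' := by
          rw [hfdef, LinearIsometryEquiv.apply_symm_apply]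
          rfl
        have hCM : IsCMDeriv d w (f : ℝ → Epath d) := by
          refine ⟨Lp.memLp f, fun t => ?_⟩
          rw [← hx'w, ← hx'eq]
          exact psiC_toDual_eq f t
        have h2 : ‖f‖^2 ≤ 2*c + 1/((n:ℝ)+1) := by
          have h3 := pow_le_pow_left₀ (norm_nonneg f) hfn 2
          rwa [Real.sq_sqrt (by positivity)] at h3
        have hval : ENNReal.ofReal ((1/2) * ∫ t in (0:ℝ)..1, ‖(f : ℝ → Epath d) t‖^2)
            ≤ ENNReal.ofReal c + ε := by
          have h1 : ∫ t in (0:ℝ)..1, ‖(f : ℝ → Epath d) t‖^2 = ‖f‖^2 :=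
            norm_sq_eq_integral f
          have h3 : (1/2) * ∫ t in (0:ℝ)..1, ‖(f : ℝ → Epath d) t‖^2
              ≤ c + 1/(2*((n:ℝ)+1)) := by
            rw [h1]
            have heq : 1/(2*((n:ℝ)+1)) = (1/((n:ℝ)+1))/2 := by
              rw [div_div]; ring_nf
            linarith
          calc ENNReal.ofReal ((1/2) * ∫ t in (0:ℝ)..1, ‖(f : ℝ → Epath d) t‖^2)
              ≤ ENNReal.ofReal (c + 1/(2*((n:ℝ)+1))) := ENNReal.ofReal_le_ofReal h3
            _ = ENNReal.ofReal c + ENNReal.ofReal (1/(2*((n:ℝ)+1))) :=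
                ENNReal.ofReal_add hc (by positivity)
            _ ≤ ENNReal.ofReal c + (ε : ENNReal) := by
                refine add_le_add_right ?_ _
                calc ENNReal.ofReal (1/(2*((n:ℝ)+1))) ≤ ENNReal.ofReal (ε:ℝ) :=
                      ENNReal.ofReal_le_ofReal hb
                  _ = (ε : ENNReal) := ENNReal.ofReal_coe_nnreal
        exact le_trans (sInf_le ⟨(f : ℝ → Epath d), hCM, rfl⟩) hval
  rw [hSeq]
  have hcomp : ∀ n : ℕ, IsCompact (psiC '' Kball d (Real.sqrt (2*c + 1/((n:ℝ)+1)))) :=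
    fun n => (WeakDual.isCompact_closedBall (𝕜 := ℝ) (0 : StrongDual ℝ (Hsp d)) _).image_of_continuousOn
      (psiC_continuousOn _ (Real.sqrt_nonneg _))
  exact (hcomp 0).of_isClosed_subset (isClosed_iInter fun n => (hcomp n).isClosed)
    (Set.iInter_subset _ 0)

end
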